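/- Let Γ be a group with a finite symmetric generating set S and word length ℓ_S, let λ ≥ 1 and ε ≥ 0, and let ψ : Γ → ℍ ×₂ ℝ be a map satisfying (1/λ)·ℓ_S(u⁻¹v) − ε ≤ dist(ψ(u), ψ(v)) ≤ λ·ℓ_S(u⁻¹v) + ε for all u, v ∈ Γ. Then for every R > 0 there exist constants A, B > 0 such that for every n ∈ ℕ, the number of elements u ∈ Γ with ℓ_S(u) ≤ n and with the ℍ-coordinate of ψ(u) at hyperbolic distance at most R from the ℍ-coordinate of ψ(1) is at most A·n + B. -/

import Mathlib

open UpperHalfPlane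

/-- `ℍ ×₂ ℝ`: the product of the hyperbolic plane and the real line with the ℓ² metric. -/
abbrev H2R := WithLp 2 (UpperHalfPlane × ℝ)

/-- The horizontal (ℍ-) coordinate of a point of `ℍ ×₂ ℝ`. -/
noncomputable def horiz (p : H2R) : UpperHalfPlane := (WithLp.equiv 2 (UpperHalfPlane × ℝ) p).1

/-- The word length of `g` with respect to a generating set `S`: the least `n` such that
`g` is a product of `n` elements of `S`. -/
noncomputable def wordLength {G : Type*} [Group G] (S : Set G) (g : G) : ℕ :=
  sInf {n : ℕ | ∃ f : Fin n → G, (∀ i, f i ∈ S) ∧ (List.ofFn f).prod = g}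

/-- The number of elements `u` of word length at most `n` whose image under `ψ` stays in
a fixed vertical cylinder of radius `R` about `ψ 1` grows at most linearly in `n`. -/
lemma rep_nonempty {G : Type*} [Group G] {S : Set G} (hSsymm : S = S⁻¹)
    (hSgen : Subgroup.closure S = ⊤) (g : G) :
    {n : ℕ | ∃ f : Fin n → G, (∀ i, f i ∈ S) ∧ (List.ofFn f).prod = g}.Nonempty := by
  have hg : g ∈ Submonoid.closure S := by
    have h1 : g ∈ Subgroup.closure S := hSgen ▸ Subgroup.mem_top g
    have h2 := Subgroup.closure_toSubmonoid S
    have : g ∈ (Subgroup.closure S).toSubmonoid := h1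
    rw [h2] at this
    rwa [← hSsymm, Set.union_self] at this
  obtain ⟨l, hl, hprod⟩ := Submonoid.exists_list_of_mem_closure hg
  exact ⟨l.length, l.get, fun i => hl _ (l.get_mem i), by rw [List.ofFn_get, hprod]⟩

lemma exists_rep {G : Type*} [Group G] {S : Set G} (hSsymm : S = S⁻¹)
    (hSgen : Subgroup.closure S = ⊤) (g : G) :
    ∃ f : Fin (wordLength S g) → G, (∀ i, f i ∈ S) ∧ (List.ofFn f).prod = g :=
  Nat.sInf_mem (rep_nonempty hSsymm hSgen g)

lemma ball_finite {G : Type*} [Group G] {S : Set G} (hS : S.Finite) (hSsymm : S = S⁻¹)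
    (hSgen : Subgroup.closure S = ⊤) (n : ℕ) :
    {u : G | wordLength S u ≤ n}.Finite := by
  have : {u : G | wordLength S u ≤ n} ⊆
      ⋃ m ∈ Finset.range (n + 1),
        (fun f : Fin m → G => (List.ofFn f).prod) '' (Set.pi Set.univ fun _ => S) := by
    intro u hu
    obtain ⟨f, hf, hprod⟩ := exists_rep hSsymm hSgen u
    simp only [Set.mem_iUnion, Finset.mem_range]
    exact ⟨wordLength S u, Nat.lt_succ_of_le hu, f, fun i _ => hf i, hprod⟩
  refine Set.Finite.subset (Set.Finite.biUnion (Finset.range (n+1)).finite_toSet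
    fun m _ => Set.Finite.image _ (Set.Finite.pi fun _ => hS)) this

theorem linear_growth_in_cylinder {Γ : Type*} [Group Γ] (S : Set Γ) (hSfin : S.Finite)
    (hSsymm : S = S⁻¹) (hSgen : Subgroup.closure S = ⊤)
    (lam eps : ℝ) (hlam : 1 ≤ lam) (heps : 0 ≤ eps)
    (ψ : Γ → H2R)
    (hlow : ∀ u v : Γ, (1 / lam) * (wordLength S (u⁻¹ * v) : ℝ) - eps ≤ dist (ψ u) (ψ v))
    (hup : ∀ u v : Γ, dist (ψ u) (ψ v) ≤ lam * (wordLength S (u⁻¹ * v) : ℝ) + eps)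
    (R : ℝ) (hR : 0 < R) :
    ∃ A > (0 : ℝ), ∃ B > (0 : ℝ), ∀ n : ℕ,
      {u : Γ | wordLength S u ≤ n ∧ dist (horiz (ψ u)) (horiz (ψ 1)) ≤ R}.Finite ∧
      ({u : Γ | wordLength S u ≤ n ∧ dist (horiz (ψ u)) (horiz (ψ 1)) ≤ R}.ncard : ℝ) ≤
        A * n + B := by
  classical
  have hlam0 : (0:ℝ) < lam := lt_of_lt_of_le one_pos hlam
  set t : Γ → ℝ := fun u => (WithLp.equiv 2 (UpperHalfPlane × ℝ) (ψ u)).2 with ht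
  have hdist : ∀ u v : Γ, dist (ψ u) (ψ v) =
      Real.sqrt (dist (horiz (ψ u)) (horiz (ψ v)) ^ 2 + |t u - t v| ^ 2) := by
    intro u v
    rw [WithLp.prod_dist_eq_add (p := 2) (by norm_num)]
    have h2 : dist (t u) (t v) = |t u - t v| := Real.dist_eq _ _
    rw [show dist (ψ u).snd (ψ v).snd = |t u - t v| from h2]
    norm_num [Real.sqrt_eq_rpow]
    rfl
  have hvert : ∀ u v : Γ, |t u - t v| ≤ dist (ψ u) (ψ v) := by
    intro u v
    rw [hdist]
    refine le_trans ?_ (Real.sqrt_le_sqrt (le_add_of_nonneg_left (by positivity)))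
    rw [Real.sqrt_sq (abs_nonneg _)]
  set N : ℕ := ⌈lam * (1 + eps + 2 * R)⌉₊ with hN
  have hballfin := ball_finite hSfin hSsymm hSgen N
  set M : ℕ := hballfin.toFinset.card with hM
  have hM1 : 1 ≤ M := by
    rw [hM, Finset.one_le_card]
    refine ⟨1, ?_⟩
    rw [Set.Finite.mem_toFinset]
    show wordLength S 1 ≤ N
    have h1 : wordLength S 1 = 0 := by
      apply Nat.eq_zero_of_le_zero
      apply Nat.sInf_le
      exact ⟨fun i => 1, fun i => i.elim0, by simp⟩
    omega
  refine ⟨(M : ℝ) * (2 * lam), mul_pos (Nat.cast_pos.mpr hM1) (by linarith), (M : ℝ) * (2 * eps + 2), mul_pos (Nat.cast_pos.mpr hM1) (by linarith), fun n => ?_⟩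
  set T := {u : Γ | wordLength S u ≤ n ∧ dist (horiz (ψ u)) (horiz (ψ 1)) ≤ R} with hT
  have hTfin : T.Finite :=
    (ball_finite hSfin hSsymm hSgen n).subset fun u hu => hu.1
  refine ⟨hTfin, ?_⟩
  set F := hTfin.toFinset with hF
  set g : Γ → ℤ := fun u => ⌊t u⌋ with hg
  set D : ℝ := lam * n + eps with hD
  have htrange : ∀ u ∈ F, t 1 - D ≤ t u ∧ t u ≤ t 1 + D := by
    intro u hu
    rw [hF, Set.Finite.mem_toFinset] at hu
    have h1 : dist (ψ 1) (ψ u) ≤ lam * (wordLength S u : ℝ) + eps := by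
      have := hup 1 u; simpa using this
    have h2 : |t u - t 1| ≤ D := by
      refine le_trans (hvert u 1) ?_
      rw [dist_comm]
      refine le_trans h1 ?_
      have h3 : (wordLength S u : ℝ) ≤ n := Nat.cast_le.mpr hu.1
      rw [hD]; nlinarith
    rw [abs_le] at h2
    constructor <;> linarith [h2.1, h2.2]
  have hfiber : ∀ a ∈ F.image g, (F.filter fun x => g x = a).card ≤ M := by
    intro a ha
    rw [Finset.mem_image] at ha
    obtain ⟨u, hu, hgu⟩ := ha
    have hsub : (F.filter fun x => g x = a) ⊆ hballfin.toFinset.image (fun w => u * w) := by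
      intro v hv
      rw [Finset.mem_filter] at hv
      obtain ⟨hvF, hgv⟩ := hv
      have habs : |t u - t v| < 1 := by
        refine Int.abs_sub_lt_one_of_floor_eq_floor ?_
        show g u = g v
        rw [hgu, hgv]
      have hHu : dist (horiz (ψ u)) (horiz (ψ 1)) ≤ R := by
        rw [hF, Set.Finite.mem_toFinset] at hu; exact hu.2
      have hHv : dist (horiz (ψ v)) (horiz (ψ 1)) ≤ R := by
        rw [hF, Set.Finite.mem_toFinset] at hvF; exact hvF.2
      have hH : dist (horiz (ψ u)) (horiz (ψ v)) ≤ 2 * R :=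
        le_trans (dist_triangle _ (horiz (ψ 1)) _)
          (by rw [dist_comm (horiz (ψ v))] at hHv; linarith)
      have hdle : dist (ψ u) (ψ v) ≤ 2 * R + 1 := by
        rw [hdist]
        have h1 : dist (horiz (ψ u)) (horiz (ψ v)) ^ 2 + |t u - t v| ^ 2 ≤ (2 * R + 1) ^ 2 := by
          have h2 : dist (horiz (ψ u)) (horiz (ψ v)) ^ 2 ≤ (2*R)^2 := by
            have := dist_nonneg (x := horiz (ψ u)) (y := horiz (ψ v)); nlinarith
          have h3 : |t u - t v| ^ 2 ≤ 1 := by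
            have := abs_nonneg (t u - t v); nlinarith
          nlinarith
        refine le_trans (Real.sqrt_le_sqrt h1) ?_
        rw [Real.sqrt_sq (by linarith)]
      have hwl : (wordLength S (u⁻¹ * v) : ℝ) ≤ lam * (1 + eps + 2 * R) := by
        have h0 := hlow u v
        have h4 : (1 / lam) * (wordLength S (u⁻¹ * v) : ℝ) ≤ 2 * R + 1 + eps := by linarith
        calc (wordLength S (u⁻¹ * v) : ℝ)
            = lam * ((1/lam) * (wordLength S (u⁻¹ * v) : ℝ)) := by field_simp
          _ ≤ lam * (2 * R + 1 + eps) := mul_le_mul_of_nonneg_left h4 (le_of_lt hlam0)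
          _ = lam * (1 + eps + 2 * R) := by ring
      have hwlN : wordLength S (u⁻¹ * v) ≤ N := by
        have h5 : (wordLength S (u⁻¹ * v) : ℝ) ≤ (N : ℝ) := le_trans hwl (Nat.le_ceil _)
        exact_mod_cast h5
      rw [Finset.mem_image]
      exact ⟨u⁻¹ * v, by rw [Set.Finite.mem_toFinset]; exact hwlN, by group⟩
    calc (F.filter fun x => g x = a).card
        ≤ (hballfin.toFinset.image (fun w => u * w)).card := Finset.card_le_card hsub
      _ ≤ hballfin.toFinset.card := Finset.card_image_le
      _ = M := rfl
  have hcount : F.card ≤ M * (F.image g).card := Finset.card_le_mul_card_image F M hfiber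
  have himg : F.image g ⊆ Finset.Icc ⌊t 1 - D⌋ ⌊t 1 + D⌋ := by
    intro a ha
    rw [Finset.mem_image] at ha
    obtain ⟨u, hu, rfl⟩ := ha
    obtain ⟨h1, h2⟩ := htrange u hu
    rw [Finset.mem_Icc]
    exact ⟨Int.floor_le_floor h1, Int.floor_le_floor h2⟩
  have hD0 : 0 ≤ D := by rw [hD]; positivity
  have hIcc : ((Finset.Icc ⌊t 1 - D⌋ ⌊t 1 + D⌋).card : ℝ) ≤ 2 * D + 2 := by
    rw [Int.card_Icc]
    have hu : (⌊t 1 + D⌋ : ℝ) ≤ t 1 + D := Int.floor_le _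
    have hl : t 1 - D - 1 < (⌊t 1 - D⌋ : ℝ) := by
      have := Int.lt_floor_add_one (t 1 - D); linarith
    rcases le_or_gt (⌊t 1 + D⌋ + 1 - ⌊t 1 - D⌋) 0 with h | h
    · rw [Int.toNat_of_nonpos h]; push_cast; linarith
    · have h0 := Int.toNat_of_nonneg h.le
      have h1 : ((⌊t 1 + D⌋ + 1 - ⌊t 1 - D⌋).toNat : ℝ) = (⌊t 1 + D⌋ : ℝ) + 1 - ⌊t 1 - D⌋ := by
        exact_mod_cast congrArg (fun z : ℤ => (z : ℝ)) h0
      rw [h1]; linarith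
  have hcard : T.ncard = F.card := Set.ncard_eq_toFinset_card T hTfin
  show (T.ncard : ℝ) ≤ _
  rw [hcard]
  have h6 : ((F.image g).card : ℝ) ≤ 2 * D + 2 :=
    le_trans (Nat.cast_le.mpr (Finset.card_le_card himg)) hIcc
  have h7 : (F.card : ℝ) ≤ (M : ℝ) * ((F.image g).card) := by exact_mod_cast hcount
  have h8 : (F.card : ℝ) ≤ (M : ℝ) * (2 * D + 2) :=
    le_trans h7 (mul_le_mul_of_nonneg_left h6 (Nat.cast_nonneg M))
  rw [hD] at h8
  nlinarith [h8]
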